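/- The linear program PP_PNE(SUM, T*_w, σ*, o*) is feasible with objective value 1: fixing any basis index k* ∈ [r], the assignment setting v_{k*}^e = (n·f_{k*}(w_j)·w_j·Σ_{i∈N} β_{ij})^{-1} for e ∈ {e({j},∅), e(∅,{j})}, j ∈ N, and all other v_k^e = 0, satisfies the ε-approximate equilibrium constraints for each player, satisfies the normalization constraint Σ_e Σ_k v_k^e f_k(n_e(o*))·Σ_i Σ_{j: e∈o*_j} β_{ij}w_j ≤ 1, and yields objective Σ_e Σ_k v_k^e f_k(n_e(σ*))·Σ_i Σ_{j: e∈σ*_j} β_{ij}w_j = 1. -/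

import Mathlib

open Finset

def cong {n : ℕ} {E : Type} [Fintype E] [DecidableEq E]
    (w : Fin n → ℝ) (σ : Fin n → Finset E) (e : E) : ℝ :=
  ∑ i ∈ univ.filter (fun i => e ∈ σ i), w i

def lat {r : ℕ} {E : Type} (f : Fin r → ℝ → ℝ) (v : E → Fin r → ℝ) (e : E) (t : ℝ) : ℝ :=
  ∑ k, v e k * f k t

abbrev RepRes (n : ℕ) := Finset (Fin n) × Finset (Fin n)

def sstar (n : ℕ) (i : Fin n) : Finset (RepRes n) :=
  univ.filter (fun e => i ∈ e.1)

def ostar (n : ℕ) (i : Fin n) : Finset (RepRes n) :=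
  univ.filter (fun e => i ∈ e.2)

/-- The explicit feasible solution: `v_{k*}^e = (n·f_{k*}(w_j)·w_j·∑_i β_{ij})⁻¹`
for `e ∈ {e({j},∅), e(∅,{j})}`, `j ∈ N`, and all other coordinates `0`. -/
noncomputable def vsol {n r : ℕ} (w : Fin n → ℝ) (f : Fin r → ℝ → ℝ)
    (β : Fin n → Fin n → ℝ) (kstar : Fin r) (e : RepRes n) (k : Fin r) : ℝ :=
  if k = kstar then
    ∑ j : Fin n,
      if e = ({j}, (∅ : Finset (Fin n))) ∨ e = ((∅ : Finset (Fin n)), {j}) then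
        ((n : ℝ) * f kstar (w j) * w j * ∑ i, β i j)⁻¹
      else 0
  else 0

-- coefficient
noncomputable def cc {n r : ℕ} (w : Fin n → ℝ) (f : Fin r → ℝ → ℝ)
    (β : Fin n → Fin n → ℝ) (kstar : Fin r) (j : Fin n) : ℝ :=
  ((n : ℝ) * f kstar (w j) * w j * ∑ i, β i j)⁻¹

lemma cong_sstar {n : ℕ} (w : Fin n → ℝ) (e : RepRes n) :
    cong w (fun j => sstar n j) e = ∑ i ∈ e.1, w i := by
  simp [cong, sstar]

lemma cong_ostar {n : ℕ} (w : Fin n → ℝ) (e : RepRes n) :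
    cong w (fun j => ostar n j) e = ∑ i ∈ e.2, w i := by
  simp [cong, ostar]

lemma filter_sstar {n : ℕ} (e : RepRes n) :
    univ.filter (fun j => e ∈ sstar n j) = e.1 := by
  ext j; simp [sstar]

lemma filter_ostar {n : ℕ} (e : RepRes n) :
    univ.filter (fun j => e ∈ ostar n j) = e.2 := by
  ext j; simp [ostar]

lemma lat_vsol {n r : ℕ} (w : Fin n → ℝ) (f : Fin r → ℝ → ℝ)
    (β : Fin n → Fin n → ℝ) (kstar : Fin r) (e : RepRes n) (t : ℝ) :
    lat f (vsol w f β kstar) e t =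
      (∑ j : Fin n,
        ((if e = ({j}, (∅ : Finset (Fin n))) then cc w f β kstar j else 0) +
         (if e = ((∅ : Finset (Fin n)), {j}) then cc w f β kstar j else 0))) * f kstar t := by
  unfold lat vsol
  rw [Finset.sum_eq_single kstar]
  · simp only [if_pos rfl]
    congr 1
    refine Finset.sum_congr rfl fun j _ => ?_
    rcases eq_or_ne e ({j}, (∅ : Finset (Fin n))) with h | h
    · have hne : e ≠ ((∅ : Finset (Fin n)), {j}) := by
        rw [h]; intro hc
        exact (Finset.singleton_ne_empty j) (congrArg Prod.fst hc)
      simp [h, hne, cc]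
    · rcases eq_or_ne e ((∅ : Finset (Fin n)), {j}) with h2 | h2
      · simp [h, h2, cc]
      · simp [h, h2]
  · intro k _ hk; simp [hk]
  · simp

lemma sum_point {E : Type} [Fintype E] [DecidableEq E] (S : Finset E) (A B : Fin 1 → E)
    (c : ℝ) (g : E → ℝ) : True := trivial

-- key summation lemma
lemma sum_lat {n r : ℕ} (w : Fin n → ℝ) (f : Fin r → ℝ → ℝ)
    (β : Fin n → Fin n → ℝ) (kstar : Fin r) (S : Finset (RepRes n))
    (t h : RepRes n → ℝ) :
    ∑ e ∈ S, lat f (vsol w f β kstar) e (t e) * h e =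
      ∑ j : Fin n,
        ((if ({j}, (∅ : Finset (Fin n))) ∈ S then
            cc w f β kstar j * (f kstar (t ({j}, ∅)) * h ({j}, ∅)) else 0) +
         (if ((∅ : Finset (Fin n)), {j}) ∈ S then
            cc w f β kstar j * (f kstar (t (∅, {j})) * h (∅, {j})) else 0)) := by
  have : ∀ e ∈ S, lat f (vsol w f β kstar) e (t e) * h e =
      ∑ j : Fin n,
        ((if e = ({j}, (∅ : Finset (Fin n))) then
            cc w f β kstar j * (f kstar (t e) * h e) else 0) +
         (if e = ((∅ : Finset (Fin n)), {j}) then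
            cc w f β kstar j * (f kstar (t e) * h e) else 0)) := by
    intro e _
    rw [lat_vsol, Finset.sum_mul, Finset.sum_mul]
    refine Finset.sum_congr rfl fun j _ => ?_
    ring_nf
    split_ifs <;> ring
  rw [Finset.sum_congr rfl this, Finset.sum_comm]
  refine Finset.sum_congr rfl fun j _ => ?_
  rw [Finset.sum_add_distrib]
  congr 1
  · rw [Finset.sum_ite_eq' S]
  · rw [Finset.sum_ite_eq' S]

/-- the linear program `PP_PNE(SUM, T*_w, σ*, o*)` is feasible with
objective value 1, as witnessed by the explicit solution `vsol`. -/
theorem stmt8 {n r : ℕ} (hn : 0 < n) (w : Fin n → ℝ) (hw : ∀ i, 0 < w i)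
    (f : Fin r → ℝ → ℝ) (hf0 : ∀ k x, f k x = 0 ↔ x = 0) (hfnn : ∀ k x, 0 ≤ f k x)
    (α : Fin n → Fin n → ℝ) (hα : ∀ i, 0 ≤ α i i)
    (β : Fin n → Fin n → ℝ) (hβ : ∀ i j, 0 ≤ β i j) (hβcol : ∀ j, 0 < ∑ i, β i j)
    (ε : ℝ) (hε : 0 ≤ ε) (kstar : Fin r) :
    -- (i) the ε-approximate equilibrium constraint of each player holds
    (∀ i : Fin n,
      (∑ e ∈ sstar n i \ ostar n i,
          lat f (vsol w f β kstar) e (cong w (fun j => sstar n j) e) *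
            (∑ j ∈ univ.filter (fun j => e ∈ sstar n j), α i j * w j))
        - (1 + ε) * ∑ e ∈ ostar n i \ sstar n i,
            lat f (vsol w f β kstar) e (cong w (fun j => sstar n j) e + w i) *
              (α i i * w i + ∑ j ∈ univ.filter (fun j => e ∈ sstar n j), α i j * w j)
      ≤ 0) ∧
    -- (ii) the normalization constraint holds
    (∑ e : RepRes n,
        lat f (vsol w f β kstar) e (cong w (fun j => ostar n j) e) *
          (∑ i, ∑ j ∈ univ.filter (fun j => e ∈ ostar n j), β i j * w j) ≤ 1) ∧
    -- (iii) the objective value equals 1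
    (∑ e : RepRes n,
        lat f (vsol w f β kstar) e (cong w (fun j => sstar n j) e) *
          (∑ i, ∑ j ∈ univ.filter (fun j => e ∈ sstar n j), β i j * w j) = 1) := by
  have hfw : ∀ j : Fin n, 0 < f kstar (w j) := fun j => by
    rcases lt_or_eq_of_le (hfnn kstar (w j)) with h | h
    · exact h
    · exact absurd ((hf0 kstar (w j)).mp h.symm) (ne_of_gt (hw j))
  have hcc : ∀ j : Fin n, 0 < cc w f β kstar j := fun j => by
    apply inv_pos.mpr
    have hn' : (0:ℝ) < n := by exact_mod_cast hn
    exact mul_pos (mul_pos (mul_pos hn' (hfw j)) (hw j)) (hβcol j)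
  have hccval : ∀ j : Fin n,
      cc w f β kstar j * (f kstar (w j) * ((∑ i, β i j) * w j)) = (n : ℝ)⁻¹ := by
    intro j
    have hn' : (n : ℝ) ≠ 0 := Nat.cast_ne_zero.mpr hn.ne'
    have h1 : f kstar (w j) ≠ 0 := ne_of_gt (hfw j)
    have h2 : w j ≠ 0 := ne_of_gt (hw j)
    have h3 : (∑ i, β i j) ≠ 0 := ne_of_gt (hβcol j)
    rw [cc]
    field_simp
  refine ⟨?_, ?_, ?_⟩
  · -- (i)
    intro i
    rw [sum_lat, sum_lat]
    have mem1 : ∀ j : Fin n,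
        (({j}, (∅ : Finset (Fin n))) ∈ sstar n i \ ostar n i) ↔ i = j := by
      intro j; simp [sstar, ostar, eq_comm]
    have mem2 : ∀ j : Fin n,
        (((∅ : Finset (Fin n)), {j}) ∈ sstar n i \ ostar n i) ↔ False := by
      intro j; simp [sstar, ostar]
    have mem3 : ∀ j : Fin n,
        (({j}, (∅ : Finset (Fin n))) ∈ ostar n i \ sstar n i) ↔ False := by
      intro j; simp [sstar, ostar]
    have mem4 : ∀ j : Fin n,
        (((∅ : Finset (Fin n)), {j}) ∈ ostar n i \ sstar n i) ↔ i = j := by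
      intro j; simp [sstar, ostar, eq_comm]
    simp only [mem1, mem2, mem3, mem4, if_false, add_zero, zero_add,
      cong_sstar, filter_sstar]
    simp only [Finset.sum_ite_eq, Finset.mem_univ, if_true]
    simp only [Finset.sum_singleton, Finset.sum_empty, zero_add, add_zero]
    have hP : 0 ≤ cc w f β kstar i * (f kstar (w i) * (α i i * w i)) := by
      have := hcc i; have := hfw i; have := hw i; have := hα i
      positivity
    nlinarith [hP]
  · -- (ii)
    rw [sum_lat]
    simp only [Finset.mem_univ, if_true, cong_ostar, filter_ostar]
    simp only [Finset.sum_singleton, Finset.sum_empty]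
    have h0 : f kstar (0:ℝ) = 0 := (hf0 kstar 0).mpr rfl
    simp only [h0, zero_mul, mul_zero, add_zero, zero_add]
    have key : ∀ j : Fin n,
        cc w f β kstar j * (f kstar (w j) * ∑ i, β i j * w j) = (n:ℝ)⁻¹ := by
      intro j; rw [← Finset.sum_mul]; exact hccval j
    rw [Finset.sum_congr rfl (fun j _ => key j)]
    simp [Finset.card_univ]
    rw [mul_inv_cancel₀ (Nat.cast_ne_zero.mpr hn.ne' : (n:ℝ) ≠ 0)]
  · -- (iii)
    rw [sum_lat]
    simp only [Finset.mem_univ, if_true, cong_sstar, filter_sstar]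
    simp only [Finset.sum_singleton, Finset.sum_empty]
    have h0 : f kstar (0:ℝ) = 0 := (hf0 kstar 0).mpr rfl
    simp only [h0, zero_mul, mul_zero, add_zero, zero_add]
    have key : ∀ j : Fin n,
        cc w f β kstar j * (f kstar (w j) * ∑ i, β i j * w j) = (n:ℝ)⁻¹ := by
      intro j; rw [← Finset.sum_mul]; exact hccval j
    rw [Finset.sum_congr rfl (fun j _ => key j)]
    simp [Finset.card_univ]
    exact mul_inv_cancel₀ (Nat.cast_ne_zero.mpr hn.ne' : (n:ℝ) ≠ 0)
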